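/- arXiv:2305.12862 — 6 statements merged into one kernel-verified Lean document; each statement's English description precedes it below -/
import Mathlib

section
/- Let p₁, p₂ ≥ 0 with p₁ + p₂ = 1, let v₁, v₂ be real numbers, and set C = p₁²v₁ + (p₂ + p₁p₂)v₂. Let a : ℕ → ℝ be any sequence satisfying the recurrence a(n) = C + (p₂ + p₁²)·a(n−2) + p₁p₂·a(n−3) for all n ≥ 4. Then a(n)/n converges, as n → ∞, to C/(2 + p₁p₂) = (p₁²v₁ + (p₂ + p₁p₂)v₂)/(2p₂ + 2p₁² + 3p₁p₂). -/
open Filter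

/-- Any sequence satisfying the renewal recurrence
`a n = C + (p₂ + p₁²)·a (n−2) + p₁p₂·a (n−3)` for `n ≥ 4`, where
`C = p₁²v₁ + (p₂ + p₁p₂)v₂` and `p₁ + p₂ = 1`, `p₁, p₂ ≥ 0`, satisfies
`a n / n → C / (2 + p₁p₂)`. -/
theorem greedy_linear_recurrence_asymptotics
    (p₁ p₂ v₁ v₂ : ℝ) (hp₁ : 0 ≤ p₁) (hp₂ : 0 ≤ p₂) (hsum : p₁ + p₂ = 1)
    (C : ℝ) (hC : C = p₁ ^ 2 * v₁ + (p₂ + p₁ * p₂) * v₂)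
    (a : ℕ → ℝ)
    (ha : ∀ n : ℕ, 4 ≤ n →
      a n = C + (p₂ + p₁ ^ 2) * a (n - 2) + p₁ * p₂ * a (n - 3)) :
    Tendsto (fun n : ℕ => a n / n) atTop (nhds (C / (2 + p₁ * p₂))) := by
  set q : ℝ := p₂ + p₁ ^ 2 with hq
  set r : ℝ := p₁ * p₂ with hr
  have hqr : q + r = 1 := by
    have : p₂ + p₁ ^ 2 + p₁ * p₂ = p₂ + p₁ * (p₁ + p₂) := by ring
    rw [hq, hr, this, hsum]; linarith
  have hrpos : (0:ℝ) ≤ r := mul_nonneg hp₁ hp₂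
  have hqpos : (0:ℝ) ≤ q := by positivity
  have hden : (0:ℝ) < 2 + r := by linarith
  set L : ℝ := C / (2 + r) with hL
  have hCL : C = L * (2 + r) := by
    rw [hL]; field_simp
  set b : ℕ → ℝ := fun n => a n - L * n with hb
  have hbrec : ∀ n : ℕ, 4 ≤ n → b n = q * b (n - 2) + r * b (n - 3) := by
    intro n hn
    have h2 : ((n - 2 : ℕ) : ℝ) = (n : ℝ) - 2 := by
      have := Nat.cast_sub (by omega : 2 ≤ n) (R := ℝ); push_cast at this ⊢; linarith
    have h3 : ((n - 3 : ℕ) : ℝ) = (n : ℝ) - 3 := by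
      have := Nat.cast_sub (by omega : 3 ≤ n) (R := ℝ); push_cast at this ⊢; linarith
    simp only [hb, ha n hn, h2, h3]
    have h23 : 2 * q + 3 * r = 2 + r := by linarith
    have key : q * ((n:ℝ) - 2) + r * ((n:ℝ) - 3) = (n:ℝ) - (2 + r) := by
      have : q * ((n:ℝ) - 2) + r * ((n:ℝ) - 3) = (q + r) * n - (2 * q + 3 * r) := by ring
      rw [this, hqr, h23]; ring
    linear_combination L * key + hCL
  set M : ℝ := max (max |b 0| |b 1|) (max |b 2| |b 3|) with hM
  have hM0 : 0 ≤ M := le_trans (abs_nonneg _) (le_trans (le_max_left _ _) (le_max_left _ _))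
  have hbound : ∀ n, |b n| ≤ M := by
    intro n
    induction n using Nat.strong_induction_on with
    | _ n ih =>
      rcases lt_or_ge n 4 with h | h
      · interval_cases n
        · exact le_trans (le_max_left _ _) (le_max_left _ _)
        · exact le_trans (le_max_right _ _) (le_max_left _ _)
        · exact le_trans (le_max_left _ _) (le_max_right _ _)
        · exact le_trans (le_max_right _ _) (le_max_right _ _)
      · rw [hbrec n h]
        have h1 := ih (n - 2) (by omega)
        have h2 := ih (n - 3) (by omega)
        calc |q * b (n-2) + r * b (n-3)| ≤ |q * b (n-2)| + |r * b (n-3)| := abs_add_le _ _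
          _ = q * |b (n-2)| + r * |b (n-3)| := by
              rw [abs_mul, abs_mul, abs_of_nonneg hqpos, abs_of_nonneg hrpos]
          _ ≤ q * M + r * M := by
              gcongr
          _ = M := by nlinarith
  have hb0 : Tendsto (fun n : ℕ => b n / n) atTop (nhds 0) := by
    apply squeeze_zero_norm (fun n => ?_) (tendsto_const_div_atTop_nhds_zero_nat M)
    rcases Nat.eq_zero_or_pos n with h | h
    · simp [h]
    · have hn' : (0:ℝ) < n := by exact_mod_cast h
      rw [norm_div, Real.norm_natCast]
      have := hbound n
      rw [Real.norm_eq_abs]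
      gcongr
  have heq : ∀ᶠ n : ℕ in atTop, b n / n + L = a n / n := by
    filter_upwards [eventually_gt_atTop 0] with n hn
    have hn' : (n : ℝ) ≠ 0 := by exact_mod_cast hn.ne'
    field_simp [hb]
    simp only [hb]; ring
  have := hb0.add_const L
  rw [zero_add] at this
  exact (this.congr' heq)
end

section
/- Let p₁, p₂ ≥ 0 with p₁ + p₂ = 1, let v₁, v₂ ∈ ℝ, and set C = p₁²v₁ + (p₂ + p₁p₂)v₂. Suppose a : ℕ → ℝ satisfies a(1) = 0, a(2) = p₁v₁ + p₂v₂, and a(n) = C + (p₂ + p₁²)·a(n−2) + p₁p₂·a(n−3) for all n ≥ 3 (where a(0) is interpreted as 0 in the case n = 3). Then for all n ≥ 3: a(n) + a(n−1) + p₁p₂·a(n−2) = C·(n−2) + p₁v₁ + p₂v₂. -/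
/-- Telescoping identity for the greedy-matching recurrence in linear networks:
if `a 0 = 0`, `a 1 = 0`, `a 2 = p₁v₁ + p₂v₂` and
`a n = C + (p₂ + p₁²)·a (n−2) + p₁p₂·a (n−3)` for all `n ≥ 3`
(with `C = p₁²v₁ + (p₂ + p₁p₂)v₂`, `p₁ + p₂ = 1`, `p₁, p₂ ≥ 0`), then for all
`n ≥ 3` we have `a n + a (n−1) + p₁p₂·a (n−2) = C·(n−2) + p₁v₁ + p₂v₂`. -/
theorem greedy_linear_recurrence_telescope
    (p₁ p₂ v₁ v₂ : ℝ) (hp₁ : 0 ≤ p₁) (hp₂ : 0 ≤ p₂) (hsum : p₁ + p₂ = 1)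
    (C : ℝ) (hC : C = p₁ ^ 2 * v₁ + (p₂ + p₁ * p₂) * v₂)
    (a : ℕ → ℝ) (h0 : a 0 = 0) (h1 : a 1 = 0) (h2 : a 2 = p₁ * v₁ + p₂ * v₂)
    (ha : ∀ n : ℕ, 3 ≤ n →
      a n = C + (p₂ + p₁ ^ 2) * a (n - 2) + p₁ * p₂ * a (n - 3)) :
    ∀ n : ℕ, 3 ≤ n →
      a n + a (n - 1) + p₁ * p₂ * a (n - 2) =
        C * ((n : ℝ) - 2) + p₁ * v₁ + p₂ * v₂ := by
  intro n hn
  induction n, hn using Nat.le_induction with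
  | base =>
    have h3 := ha 3 le_rfl
    simp only [show (3:ℕ)-2 = 1 from rfl, show (3:ℕ)-3 = 0 from rfl,
      show (3:ℕ)-1 = 2 from rfl] at *
    rw [h3, h2, h1, h0]
    push_cast
    ring
  | succ n hn ih =>
    have hrec := ha (n + 1) (by omega)
    have e1 : n + 1 - 1 = n := by omega
    have e2 : n + 1 - 2 = n - 1 := by omega
    have e3 : n + 1 - 3 = n - 2 := by omega
    rw [e2, e3] at hrec; rw [e1, e2]
    rw [hrec]
    have key : p₂ + p₁ ^ 2 + p₁ * p₂ = 1 := by nlinarith [hsum]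
    have : a (n+1-1) = a n := by rw [e1]
    calc C + (p₂ + p₁ ^ 2) * a (n - 1) + p₁ * p₂ * a (n - 2) + a n +
          p₁ * p₂ * a (n - 1)
        = C + (p₂ + p₁ ^ 2 + p₁ * p₂) * a (n - 1) + p₁ * p₂ * a (n - 2) + a n := by
          ring
      _ = C + (a n + a (n - 1) + p₁ * p₂ * a (n - 2)) := by rw [key]; ring
      _ = C * ((↑(n+1) : ℝ) - 2) + p₁ * v₁ + p₂ * v₂ := by
          rw [ih]; push_cast; ring
end

section
/- Let v₁, v₂ be real numbers with 0 ≤ v₁ ≤ v₂ and v₂ > 0, and let p₁ ∈ [0,1] with p₂ = 1 − p₁. Then (p₁²v₁ + (p₂ + p₁p₂)v₂) ≥ (8/9) · (2p₂ + 2p₁² + 3p₁p₂) · (v₁/2 + (v₂ − v₁)·(1 − p₁)/(2 − p₁)), with equality for the ratio achieved in the limit v₂/v₁ → 1⁺ with p₁ = p₂ = 1/2. -/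
/-- Algebraic content of Proposition 4: for `0 ≤ v₁ ≤ v₂`, `v₂ > 0`,
`p₁ ∈ [0,1]` and `p₂ = 1 − p₁`,
`p₁²v₁ + (p₂ + p₁p₂)v₂ ≥ (8/9)·(2p₂ + 2p₁² + 3p₁p₂)·(v₁/2 + (v₂−v₁)(1−p₁)/(2−p₁))`,
with equality when `p₁ = p₂ = 1/2` and `v₁ = v₂` (the limit `v₂/v₁ → 1⁺`). -/
theorem greedy_linear_ratio_ge_eight_ninths
    (v₁ v₂ : ℝ) (hv₁ : 0 ≤ v₁) (hv : v₁ ≤ v₂) (hv₂ : 0 < v₂)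
    (p₁ : ℝ) (hp₁0 : 0 ≤ p₁) (hp₁1 : p₁ ≤ 1) (p₂ : ℝ) (hp₂ : p₂ = 1 - p₁) :
    (p₁ ^ 2 * v₁ + (p₂ + p₁ * p₂) * v₂ ≥
      (8 / 9) * (2 * p₂ + 2 * p₁ ^ 2 + 3 * p₁ * p₂) *
        (v₁ / 2 + (v₂ - v₁) * (1 - p₁) / (2 - p₁))) ∧
    ((p₁ = 1 / 2 ∧ v₁ = v₂) →
      p₁ ^ 2 * v₁ + (p₂ + p₁ * p₂) * v₂ =
        (8 / 9) * (2 * p₂ + 2 * p₁ ^ 2 + 3 * p₁ * p₂) *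
          (v₁ / 2 + (v₂ - v₁) * (1 - p₁) / (2 - p₁))) := by
  subst hp₂
  have h2 : (0:ℝ) < 2 - p₁ := by linarith
  constructor
  · rw [ge_iff_le, div_add_div _ _ (two_ne_zero) (ne_of_gt h2), ← mul_div_assoc, div_le_iff₀ (by positivity)]
    nlinarith [sq_nonneg (p₁ - 1/2), sq_nonneg p₁, mul_nonneg hp₁0 (sub_nonneg.2 hv),
      mul_nonneg (mul_nonneg hp₁0 hp₁0) (sub_nonneg.2 hv),
      sq_nonneg (2*p₁ - 1), mul_nonneg (sq_nonneg (2*p₁-1)) hv₁,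
      mul_nonneg (sq_nonneg (2*p₁-1)) hv₂.le, mul_nonneg (mul_nonneg hp₁0 (sub_nonneg.2 hp₁1)) (sub_nonneg.2 hv)]
  · rintro ⟨h1, hveq⟩
    subst h1; subst hveq
    ring
end

section
/- Let K ≥ 1 be a natural number and let v₁, …, v_K be real numbers with 0 ≤ v₁ ≤ v₂ ≤ ⋯ ≤ v_K. Then Σ_{k=1}^K v_k · (K−1)^{K−k}/(K+1)^{K−k+1} ≥ (1 − ((K−1)/(K+1))^K) · Σ_{k=1}^K v_k · K/((2K+1−k)(2K−k)). -/
open Finset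

private noncomputable def dcoef (K k : ℕ) : ℝ :=
  ((K : ℝ) - 1) ^ (K - k) / ((K : ℝ) + 1) ^ (K - k + 1) -
    (1 - (((K : ℝ) - 1) / ((K : ℝ) + 1)) ^ K) *
      ((K : ℝ) / ((2 * (K : ℝ) + 1 - (k : ℝ)) * (2 * (K : ℝ) - (k : ℝ))))

private lemma G_nonneg (K : ℕ) (hK : 1 ≤ K) (n : ℕ) (hn : n ≤ K) :
    ((K : ℝ) + n) * (((K : ℝ) - 1) / ((K : ℝ) + 1)) ^ n ≤
      ((K : ℝ) - n) + 2 * n * (((K : ℝ) - 1) / ((K : ℝ) + 1)) ^ K := by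
  have hK1 : (1:ℝ) ≤ (K:ℝ) := by exact_mod_cast hK
  set q : ℝ := ((K:ℝ) - 1) / ((K:ℝ) + 1) with hqdef
  have hKp : (0:ℝ) < (K:ℝ) + 1 := by linarith
  have hq0 : 0 ≤ q := div_nonneg (by linarith) hKp.le
  have hq1 : q ≤ 1 := by rw [hqdef, div_le_one hKp]; linarith
  have hqe : q * ((K:ℝ) + 1) = (K:ℝ) - 1 := by
    rw [hqdef]; exact div_mul_cancel₀ _ hKp.ne'
  set G : ℕ → ℝ := fun m => ((K:ℝ) - m) + 2 * m * q ^ K - ((K:ℝ) + m) * q ^ m with hGdef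
  set D : ℕ → ℝ := fun m =>
    2 * q ^ K - 1 + q ^ m * (((K:ℝ) + m) - ((K:ℝ) + m + 1) * q) with hDdef
  have hGD : ∀ m : ℕ, G (m + 1) = G m + D m := by
    intro m
    simp only [hGdef, hDdef]
    push_cast
    ring
  have hGtel : ∀ b : ℕ, G b = G 0 + ∑ m ∈ range b, D m := by
    intro b
    induction b with
    | zero => simp
    | succ b ih => rw [Finset.sum_range_succ, hGD, ih]; ring
  have hq2 : q^2 * ((K:ℝ)+1)^2 = ((K:ℝ)-1)^2 := by
    rw [← mul_pow, hqe]
  have Dstep : ∀ m : ℕ, D (m + 1) ≤ D m := by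
    intro m
    have hx : (((K:ℝ)+m) - 2*((K:ℝ)+m+1)*q + ((K:ℝ)+m+2)*q^2) * ((K:ℝ)+1)^2
        = 4*(m:ℝ) + 4 := by
      linear_combination (-2*((K:ℝ)+m+1)*((K:ℝ)+1)) * hqe + ((K:ℝ)+m+2) * hq2
    have hxpos : 0 ≤ ((K:ℝ)+m) - 2*((K:ℝ)+m+1)*q + ((K:ℝ)+m+2)*q^2 := by
      nlinarith [mul_pos hKp hKp, Nat.cast_nonneg (α := ℝ) m]
    have hdd : D m - D (m+1)
        = q^m * (((K:ℝ)+m) - 2*((K:ℝ)+m+1)*q + ((K:ℝ)+m+2)*q^2) := by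
      simp only [hDdef]
      push_cast
      ring
    nlinarith [mul_nonneg (pow_nonneg hq0 m) hxpos]
  have hDanti : Antitone D := antitone_nat_of_succ_le Dstep
  have hG0 : G 0 = 0 := by simp [hGdef]
  have hGK : G K = 0 := by simp only [hGdef]; ring
  have hGn : 0 ≤ G n := by
    rcases le_or_gt (D n) 0 with hc | hc
    · have htel : G K = G n + ∑ m ∈ Ico n K, D m := by
        rw [hGtel K, hGtel n, Finset.sum_Ico_eq_sub _ hn]; ring
      have hs : ∑ m ∈ Ico n K, D m ≤ 0 :=
        Finset.sum_nonpos (fun m hm => le_trans (hDanti (Finset.mem_Ico.1 hm).1) hc)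
      rw [hGK] at htel
      linarith
    · have htel : G n = G 0 + ∑ m ∈ range n, D m := hGtel n
      have hs : 0 ≤ ∑ m ∈ range n, D m :=
        Finset.sum_nonneg (fun m hm =>
          le_of_lt (lt_of_lt_of_le hc (hDanti (le_of_lt (Finset.mem_range.1 hm)))))
      rw [hG0] at htel
      linarith
  simp only [hGdef] at hGn
  linarith

private lemma tail_nonneg (K : ℕ) (hK : 1 ≤ K) (n : ℕ) (hn : n ≤ K) :
    0 ≤ ∑ j ∈ range n, dcoef K (K - j) := by
  have hK1 : (1:ℝ) ≤ (K:ℝ) := by exact_mod_cast hK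
  set q : ℝ := ((K:ℝ) - 1) / ((K:ℝ) + 1) with hqdef
  have hKp : (0:ℝ) < (K:ℝ) + 1 := by linarith
  have hqe : q * ((K:ℝ) + 1) = (K:ℝ) - 1 := by
    rw [hqdef]; exact div_mul_cancel₀ _ hKp.ne'
  have hqlt : q < 1 := by rw [hqdef, div_lt_one hKp]; linarith
  set f : ℕ → ℝ := fun j => (K:ℝ) / ((K:ℝ) + (j:ℝ)) with hfdef
  have hterm : ∀ j ∈ range n, dcoef K (K - j)
      = q ^ j / ((K:ℝ) + 1) - (1 - q ^ K) * (f j - f (j + 1)) := by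
    intro j hj
    have hjK : j ≤ K := le_trans (le_of_lt (mem_range.1 hj)) hn
    have h1 : K - (K - j) = j := Nat.sub_sub_self hjK
    have h2 : ((K - j : ℕ) : ℝ) = (K:ℝ) - (j:ℝ) := by
      push_cast [hjK]; ring
    have hj0 : (0:ℝ) ≤ (j:ℝ) := Nat.cast_nonneg j
    have hp1 : (0:ℝ) < (K:ℝ) + (j:ℝ) := by linarith
    have hp2 : (0:ℝ) < (K:ℝ) + (j:ℝ) + 1 := by linarith
    unfold dcoef
    rw [h1, h2]
    have hpow : ((K:ℝ) - 1) ^ j / ((K:ℝ) + 1) ^ (j + 1) = q ^ j / ((K:ℝ) + 1) := by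
      rw [hqdef, div_pow, div_div, ← pow_succ]
    have hfrac : (K:ℝ) / ((2*(K:ℝ)+1-((K:ℝ)-(j:ℝ))) * (2*(K:ℝ)-((K:ℝ)-(j:ℝ))))
        = f j - f (j + 1) := by
      simp only [hfdef]
      push_cast
      rw [show (K:ℝ) + ((j:ℝ) + 1) = (K:ℝ) + (j:ℝ) + 1 by ring]
      rw [div_sub_div _ _ hp1.ne' hp2.ne', div_eq_div_iff (by nlinarith) (by positivity)]
      ring
    rw [hpow, hfrac]
  rw [Finset.sum_congr rfl hterm, Finset.sum_sub_distrib, ← Finset.sum_div,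
    ← Finset.mul_sum, Finset.sum_range_sub' f n, geom_sum_eq (ne_of_lt hqlt)]
  have h2 : (q - 1) * ((K:ℝ) + 1) = -2 := by linear_combination hqe
  have e1 : (q ^ n - 1) / (q - 1) / ((K:ℝ) + 1) = (1 - q ^ n) / 2 := by
    rw [div_div, h2]; ring
  have hf0 : f 0 = 1 := by
    simp only [hfdef, Nat.cast_zero, add_zero]
    exact div_self (by linarith)
  rw [e1, hf0]
  have hKn : (0:ℝ) < (K:ℝ) + (n:ℝ) := by
    have : (0:ℝ) ≤ (n:ℝ) := Nat.cast_nonneg n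
    linarith
  have e2 : 1 - f n = (n:ℝ) / ((K:ℝ) + (n:ℝ)) := by
    simp only [hfdef]
    field_simp
    ring
  rw [e2]
  have hGn := G_nonneg K hK n hn
  rw [← hqdef] at hGn
  rw [sub_nonneg, ← mul_div_assoc, div_le_div_iff₀ hKn two_pos]
  nlinarith [hGn]

/-- Algebraic content of Proposition 5: for `0 ≤ v 1 ≤ v 2 ≤ ⋯ ≤ v K`,
`∑_{k=1}^K v k · (K−1)^{K−k}/(K+1)^{K−k+1}`
`≥ (1 − ((K−1)/(K+1))^K) · ∑_{k=1}^K v k · K/((2K+1−k)(2K−k))`. -/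
theorem greedy_linear_uniform_ratio_bound
    (K : ℕ) (hK : 1 ≤ K) (v : ℕ → ℝ) (h0 : 0 ≤ v 1)
    (hmono : ∀ k, 1 ≤ k → k < K → v k ≤ v (k + 1)) :
    ∑ k ∈ Finset.Icc 1 K,
        v k * (((K : ℝ) - 1) ^ (K - k) / ((K : ℝ) + 1) ^ (K - k + 1)) ≥
      (1 - (((K : ℝ) - 1) / ((K : ℝ) + 1)) ^ K) *
        ∑ k ∈ Finset.Icc 1 K,
          v k * ((K : ℝ) / ((2 * (K : ℝ) + 1 - (k : ℝ)) * (2 * (K : ℝ) - (k : ℝ)))) := by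
  rw [ge_iff_le, ← sub_nonneg, Finset.mul_sum, ← Finset.sum_sub_distrib]
  have hrw : ∀ k ∈ Icc 1 K,
      v k * (((K : ℝ) - 1) ^ (K - k) / ((K : ℝ) + 1) ^ (K - k + 1)) -
        (1 - (((K : ℝ) - 1) / ((K : ℝ) + 1)) ^ K) *
          (v k * ((K : ℝ) / ((2 * (K : ℝ) + 1 - (k : ℝ)) * (2 * (K : ℝ) - (k : ℝ)))))
        = v k * dcoef K k := by
    intro k _
    unfold dcoef
    ring
  rw [Finset.sum_congr rfl hrw]
  have hre : ∑ k ∈ Icc 1 K, v k * dcoef K k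
      = ∑ j ∈ range K, v (K - j) * dcoef K (K - j) := by
    refine Finset.sum_nbij' (fun k => K - k) (fun j => K - j) ?_ ?_ ?_ ?_ ?_
    · intro k hk; simp only [mem_Icc] at hk; simp only [mem_range]; omega
    · intro j hj; simp only [mem_range] at hj; simp only [mem_Icc]; omega
    · intro k hk; simp only [mem_Icc] at hk; omega
    · intro j hj; simp only [mem_range] at hj; omega
    · intro k hk; simp only [mem_Icc] at hk
      rw [Nat.sub_sub_self hk.2]
  rw [hre]
  have abel : ∀ n, 1 ≤ n → n ≤ K →
      v (K - n + 1) * (∑ j ∈ range n, dcoef K (K - j)) ≤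
        ∑ j ∈ range n, v (K - j) * dcoef K (K - j) := by
    intro n hn
    induction n, hn using Nat.le_induction with
    | base =>
      intro _
      rw [Finset.sum_range_one, Finset.sum_range_one, show K - 1 + 1 = K by omega,
        show K - 0 = K from rfl]
    | succ n hn ih =>
      intro hnK
      have hnK' : n ≤ K := by omega
      have ihh := ih hnK'
      have hQ : 0 ≤ ∑ j ∈ range n, dcoef K (K - j) := tail_nonneg K hK n hnK'
      have hv : v (K - n) ≤ v (K - n + 1) := hmono (K - n) (by omega) (by omega)
      have e1 : K - (n + 1) + 1 = K - n := by omega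
      rw [e1, Finset.sum_range_succ, Finset.sum_range_succ]
      have h1 := mul_le_mul_of_nonneg_right hv hQ
      nlinarith [ihh, h1]
  have hfin := abel K hK le_rfl
  rw [show K - K + 1 = 1 by omega] at hfin
  have hQK : 0 ≤ ∑ j ∈ range K, dcoef K (K - j) := tail_nonneg K hK K le_rfl
  nlinarith [mul_nonneg h0 hQK]
end

section
/- Let K ≥ 1 be a natural number, let v₁, …, v_K ∈ ℝ, and define β_k = (K−1)^{K−k}·(K+1)^{k−1}/K^K and γ_k = (1/K^{k+1})·Σ_{i=k}^K i·C(i−1, k−1) for k = 1, …, K. Let a : ℕ → ℝ be any sequence satisfying a(n) = Σ_{k=1}^K β_k v_k + Σ_{k=1}^K γ_k·a(n−k−1) for all n ≥ K+2. Then a(n)/n converges, as n → ∞, to (Σ_{k=1}^K β_k v_k)/(Σ_{k=1}^K (k+1)γ_k). -/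
open Filter Finset

lemma my_inner_sum (K i : ℕ) (hi : 1 ≤ i) (hK : 1 ≤ K) :
    ∑ k ∈ Icc 1 i, (1/(K:ℝ)^(k+1)) * ((i:ℝ) * (Nat.choose (i-1) (k-1) : ℝ))
      = (i:ℝ) * ((K:ℝ)+1)^(i-1) / (K:ℝ)^(i+1) := by
  have hK0 : (0:ℝ) < K := by exact_mod_cast hK
  obtain ⟨m, rfl⟩ : ∃ m, i = m + 1 := ⟨i - 1, by omega⟩
  have h1 : Icc 1 (m+1) = Ico 1 (m+2) := by
    ext x; simp only [mem_Icc, mem_Ico]; omega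
  rw [h1, Finset.sum_Ico_eq_sum_range]
  simp only [Nat.add_sub_cancel, Nat.add_sub_cancel_left, show m+2-1 = m+1 from rfl,
    show ∀ j, 1+j-1 = j from fun j => by omega, show ∀ j, 1+j+1 = j+2 from fun j => by omega]
  have key : ∀ j ∈ range (m+1),
      (1/(K:ℝ)^(j+2)) * (((m+1:ℕ):ℝ) * (Nat.choose m j : ℝ))
        = (((m:ℝ)+1)/(K:ℝ)^2) * ((1/(K:ℝ))^j * 1^(m-j) * (Nat.choose m j : ℝ)) := by
    intro j hj
    rw [one_div_pow, pow_add]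
    push_cast
    ring
  rw [Finset.sum_congr rfl key, ← Finset.mul_sum, ← add_pow (1/(K:ℝ)) 1 m]
  have h2 : (1/(K:ℝ) + 1) = ((K:ℝ)+1)/K := by field_simp; ring
  rw [h2, div_pow]
  push_cast
  field_simp
  ring

lemma geom_deriv (r : ℝ) : ∀ n : ℕ,
    (1 - r)^2 * ∑ i ∈ range n, ((i:ℝ)+1) * r^i
      = 1 - ((n:ℝ)+1)*r^n + (n:ℝ)*r^(n+1) := by
  intro n
  induction n with
  | zero => simp
  | succ n ih =>
    rw [Finset.sum_range_succ, mul_add, ih]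
    push_cast
    ring

lemma my_outer_sum (K : ℕ) (hK : 1 ≤ K) :
    ∑ i ∈ Icc 1 K, (i:ℝ) * ((K:ℝ)+1)^(i-1) / (K:ℝ)^(i+1) = 1 := by
  have hK0 : (0:ℝ) < K := by exact_mod_cast hK
  set r : ℝ := ((K:ℝ)+1)/K with hr
  have hr1 : 1 - r = -(1/K) := by rw [hr]; field_simp; ring
  have h1 : Icc 1 K = Ico 1 (K+1) := by ext x; simp only [mem_Icc, mem_Ico]; omega
  rw [h1, Finset.sum_Ico_eq_sum_range]
  simp only [Nat.add_sub_cancel, show K+1-1 = K from rfl,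
    show ∀ j, 1+j-1 = j from fun j => by omega, show ∀ j, 1+j+1 = j+2 from fun j => by omega]
  have key : ∀ j ∈ range K,
      ((1+j:ℕ):ℝ) * ((K:ℝ)+1)^j / (K:ℝ)^(j+2)
        = (1/(K:ℝ)^2) * (((j:ℝ)+1) * r^j) := by
    intro j hj
    rw [hr, div_pow, pow_add]
    push_cast
    field_simp
    ring
  rw [Finset.sum_congr rfl key, ← Finset.mul_sum]
  have hg := geom_deriv r K
  rw [hr1] at hg
  have h2 : ∑ i ∈ range K, ((i:ℝ)+1) * r^i = (K:ℝ)^2 * (1 - ((K:ℝ)+1)*r^K + (K:ℝ)*r^(K+1)) := by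
    have : (-(1/(K:ℝ)))^2 = 1/(K:ℝ)^2 := by ring
    rw [this] at hg
    field_simp at hg
    linarith [hg]
  rw [h2, hr, div_pow, div_pow]
  field_simp
  ring


lemma my_gamma_sum (K : ℕ) (hK : 1 ≤ K) :
    ∑ k ∈ Icc 1 K, (1 / (K:ℝ)^(k+1)) *
      ∑ i ∈ Finset.Icc k K, (i : ℝ) * (Nat.choose (i-1) (k-1) : ℝ) = 1 := by
  have h1 : ∑ k ∈ Icc 1 K, (1 / (K:ℝ)^(k+1)) *
      ∑ i ∈ Icc k K, (i : ℝ) * (Nat.choose (i-1) (k-1) : ℝ)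
      = ∑ k ∈ Icc 1 K, ∑ i ∈ Icc k K,
          (1 / (K:ℝ)^(k+1)) * ((i : ℝ) * (Nat.choose (i-1) (k-1) : ℝ)) := by
    exact Finset.sum_congr rfl fun k _ => Finset.mul_sum _ _ _
  rw [h1]
  rw [Finset.sum_comm' (s := Icc 1 K) (t := fun k => Icc k K)
    (t' := Icc 1 K) (s' := fun i => Icc 1 i)
    (by intro k i; simp only [mem_Icc]; omega)]
  rw [Finset.sum_congr rfl fun i hi =>
    my_inner_sum K i (mem_Icc.mp hi).1 hK]
  exact my_outer_sum K hK


/-- Proposition 3: any sequence satisfying the renewal recurrence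
`a n = ∑_{k=1}^K β_k v_k + ∑_{k=1}^K γ_k · a (n−k−1)` for `n ≥ K+2`, with
`β_k = (K−1)^{K−k} (K+1)^{k−1} / K^K` and
`γ_k = (1/K^{k+1}) ∑_{i=k}^K i·C(i−1,k−1)` for `1 ≤ k ≤ K`, satisfies
`a n / n → (∑_k β_k v_k)/(∑_k (k+1)γ_k)`. -/
theorem greedy_linear_uniform_recurrence_asymptotics
    (K : ℕ) (hK : 1 ≤ K) (v : ℕ → ℝ) (β γ : ℕ → ℝ)
    (hβ : ∀ k, 1 ≤ k → k ≤ K →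
      β k = ((K : ℝ) - 1) ^ (K - k) * ((K : ℝ) + 1) ^ (k - 1) / (K : ℝ) ^ K)
    (hγ : ∀ k, 1 ≤ k → k ≤ K →
      γ k = (1 / (K : ℝ) ^ (k + 1)) *
        ∑ i ∈ Finset.Icc k K, (i : ℝ) * (Nat.choose (i - 1) (k - 1) : ℝ))
    (a : ℕ → ℝ)
    (ha : ∀ n : ℕ, K + 2 ≤ n →
      a n = (∑ k ∈ Finset.Icc 1 K, β k * v k) +
        ∑ k ∈ Finset.Icc 1 K, γ k * a (n - k - 1)) :
    Tendsto (fun n : ℕ => a n / n) atTop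
      (nhds ((∑ k ∈ Finset.Icc 1 K, β k * v k) /
        (∑ k ∈ Finset.Icc 1 K, ((k : ℝ) + 1) * γ k))) := by
  set B : ℝ := ∑ k ∈ Finset.Icc 1 K, β k * v k with hB
  set D : ℝ := ∑ k ∈ Finset.Icc 1 K, ((k : ℝ) + 1) * γ k with hD
  -- sum of γ is 1
  have hγsum : ∑ k ∈ Icc 1 K, γ k = 1 := by
    rw [Finset.sum_congr rfl fun k hk => hγ k (mem_Icc.mp hk).1 (mem_Icc.mp hk).2]
    exact my_gamma_sum K hK
  -- γ nonneg
  have hγ0 : ∀ k ∈ Icc 1 K, 0 ≤ γ k := by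
    intro k hk
    rw [hγ k (mem_Icc.mp hk).1 (mem_Icc.mp hk).2]
    apply mul_nonneg
    · positivity
    · exact Finset.sum_nonneg fun i _ => by positivity
  -- D ≥ 2
  have hD2 : (2:ℝ) ≤ D := by
    have : ∑ k ∈ Icc 1 K, (2:ℝ) * γ k ≤ D := by
      apply Finset.sum_le_sum
      intro k hk
      have h1 : (1:ℝ) ≤ (k:ℝ) := by exact_mod_cast (mem_Icc.mp hk).1
      have := hγ0 k hk
      nlinarith
    rw [← Finset.mul_sum, hγsum, mul_one] at this
    exact this
  have hDne : D ≠ 0 := by linarith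
  set c : ℝ := B / D with hc
  have hcD : c * D = B := div_mul_cancel₀ B hDne
  set b : ℕ → ℝ := fun n => a n - c * n with hbdef
  -- recurrence for b
  have hb : ∀ n, K + 2 ≤ n → b n = ∑ k ∈ Icc 1 K, γ k * b (n - k - 1) := by
    intro n hn
    have hcast : ∀ k ∈ Icc 1 K, ((n - k - 1 : ℕ) : ℝ) = (n:ℝ) - (k:ℝ) - 1 := by
      intro k hk
      have hk' := mem_Icc.mp hk
      have h1 : k + 1 ≤ n := by omega
      rw [Nat.sub_sub, Nat.cast_sub h1]
      push_cast
      ring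
    have step1 : ∑ k ∈ Icc 1 K, γ k * b (n - k - 1)
        = (∑ k ∈ Icc 1 K, γ k * a (n - k - 1))
          - c * ∑ k ∈ Icc 1 K, γ k * ((n:ℝ) - (k:ℝ) - 1) := by
      rw [Finset.mul_sum, ← Finset.sum_sub_distrib]
      apply Finset.sum_congr rfl
      intro k hk
      simp only [hbdef]
      rw [hcast k hk]
      ring
    have step2 : ∑ k ∈ Icc 1 K, γ k * ((n:ℝ) - (k:ℝ) - 1)
        = (n:ℝ) * (∑ k ∈ Icc 1 K, γ k) - D := by
      rw [Finset.mul_sum, hD, ← Finset.sum_sub_distrib]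
      apply Finset.sum_congr rfl
      intro k hk
      ring
    have han := ha n hn
    simp only [hbdef]
    rw [step1, step2, hγsum, mul_one]
    linarith [han, hcD]
  -- boundedness of b
  obtain ⟨M, hM⟩ : ∃ M : ℝ, ∀ n, |b n| ≤ M := by
    have hne : (range (K+2)).Nonempty := ⟨0, mem_range.mpr (by omega)⟩
    refine ⟨(range (K+2)).sup' hne (fun j => |b j|), ?_⟩
    intro n
    induction n using Nat.strong_induction_on with
    | _ n ih =>
      by_cases h : K + 2 ≤ n
      · rw [hb n h]
        calc |∑ k ∈ Icc 1 K, γ k * b (n - k - 1)|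
            ≤ ∑ k ∈ Icc 1 K, |γ k * b (n - k - 1)| := Finset.abs_sum_le_sum_abs _ _
          _ ≤ ∑ k ∈ Icc 1 K, γ k * ((range (K+2)).sup' hne (fun j => |b j|)) := by
              apply Finset.sum_le_sum
              intro k hk
              rw [abs_mul, abs_of_nonneg (hγ0 k hk)]
              apply mul_le_mul_of_nonneg_left _ (hγ0 k hk)
              have hklt : n - k - 1 < n := by
                have := (mem_Icc.mp hk).1; omega
              exact ih _ hklt
          _ = (range (K+2)).sup' hne (fun j => |b j|) := by
              rw [← Finset.sum_mul, hγsum, one_mul]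
      · exact Finset.le_sup' (fun j => |b j|) (mem_range.mpr (by omega))
  -- conclude
  have h0 : Tendsto (fun n : ℕ => M / (n:ℝ)) atTop (nhds 0) :=
    tendsto_const_div_atTop_nhds_zero_nat M
  have hsub : Tendsto (fun n : ℕ => a n / n - c) atTop (nhds 0) := by
    apply squeeze_zero_norm' _ h0
    filter_upwards [eventually_ge_atTop 1] with n hn
    have hn0 : (0:ℝ) < n := by exact_mod_cast hn
    have heq : a n / n - c = b n / n := by
      simp only [hbdef]
      field_simp
    rw [heq, Real.norm_eq_abs, abs_div, abs_of_pos hn0]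
    gcongr
    exact hM n
  have := hsub.add_const c
  simp only [zero_add] at this
  convert this using 2 with n
  ring
end

section
/- For every real x > 0, there exists a unique y in the open interval (0,1) satisfying y = e^{−x} · Σ_{i=0}^∞ x^i·(1 − (1−y)^{i+1}) / ((i+1)!·y), where the series on the right converges. -/
lemma exp_tsum' (z : ℝ) : Real.exp z = ∑' n : ℕ, z ^ n / (Nat.factorial n : ℝ) := by
  rw [Real.exp_eq_exp_ℝ, NormedSpace.exp_eq_tsum_div]

lemma shifted_summable (z : ℝ) :
    Summable (fun i : ℕ => z ^ (i + 1) / (Nat.factorial (i + 1) : ℝ)) :=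
  (Real.summable_pow_div_factorial z).comp_injective (add_left_injective 1)

lemma shifted_tsum (z : ℝ) :
    ∑' i : ℕ, z ^ (i + 1) / (Nat.factorial (i + 1) : ℝ) = Real.exp z - 1 := by
  have h := Summable.tsum_eq_zero_add (Real.summable_pow_div_factorial z)
  rw [← exp_tsum'] at h
  simp at h
  linarith

lemma aux_sum (x y : ℝ) (hx : 0 < x) (hy : y ≠ 0) :
    Summable (fun i : ℕ => x ^ i * (1 - (1 - y) ^ (i + 1)) / ((Nat.factorial (i + 1) : ℝ) * y)) ∧
    ∑' i : ℕ, x ^ i * (1 - (1 - y) ^ (i + 1)) / ((Nat.factorial (i + 1) : ℝ) * y)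
      = (Real.exp x - Real.exp (x * (1 - y))) / (x * y) := by
  have hfe : (fun i : ℕ => x ^ i * (1 - (1 - y) ^ (i + 1)) / ((Nat.factorial (i + 1) : ℝ) * y))
      = fun i : ℕ => (x ^ (i + 1) / (Nat.factorial (i + 1) : ℝ)
          - (x * (1 - y)) ^ (i + 1) / (Nat.factorial (i + 1) : ℝ)) / (x * y) := by
    funext i
    have hfac : (Nat.factorial (i + 1) : ℝ) ≠ 0 := Nat.cast_ne_zero.2 (Nat.factorial_ne_zero _)
    rw [mul_pow]
    field_simp
    ring
  have hs : Summable (fun i : ℕ => (x ^ (i + 1) / (Nat.factorial (i + 1) : ℝ)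
      - (x * (1 - y)) ^ (i + 1) / (Nat.factorial (i + 1) : ℝ)) / (x * y)) :=
    ((shifted_summable x).sub (shifted_summable (x * (1 - y)))).div_const _
  constructor
  · rw [hfe]; exact hs
  · rw [hfe, tsum_div_const,
      Summable.tsum_sub (shifted_summable x) (shifted_summable (x * (1 - y))),
      shifted_tsum, shifted_tsum]
    ring

/-- The fixed-point equation is equivalent to `exp(-(x y)) + x y² - 1 = 0`. -/
lemma fixed_iff (x : ℝ) (hx : 0 < x) {y : ℝ} (h0 : 0 < y) :
    (y = Real.exp (-x) *
        ∑' i : ℕ, x ^ i * (1 - (1 - y) ^ (i + 1)) / ((Nat.factorial (i + 1) : ℝ) * y))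
    ↔ Real.exp (-(x * y)) + x * y ^ 2 - 1 = 0 := by
  obtain ⟨hs, ht⟩ := aux_sum x y hx h0.ne'
  rw [ht]
  have hnum : Real.exp (-x) * (Real.exp x - Real.exp (x * (1 - y)))
      = 1 - Real.exp (-(x * y)) := by
    rw [mul_sub, ← Real.exp_add, ← Real.exp_add]
    ring_nf
    rw [Real.exp_zero]
  rw [← mul_div_assoc, hnum]
  have hxy : (0:ℝ) < x * y := mul_pos hx h0
  rw [eq_div_iff hxy.ne']
  constructor <;> intro h <;> nlinarith

/-- `y ↦ exp(-(x y)) + x y² - 1` is strictly convex. -/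
lemma Hconvex (x : ℝ) (hx : 0 < x) :
    StrictConvexOn ℝ Set.univ (fun y : ℝ => Real.exp (-(x * y)) + x * y ^ 2 - 1) := by
  set H : ℝ → ℝ := fun y => Real.exp (-(x * y)) + x * y ^ 2 - 1 with hH
  have hd : ∀ y : ℝ, HasDerivAt H (Real.exp (-(x * y)) * (-x) + x * (2 * y)) y := by
    intro y
    have h1 : HasDerivAt (fun y : ℝ => -(x * y)) (-x) y := by
      have := ((hasDerivAt_id y).const_mul x).neg
      simp only [id, mul_one] at this
      exact this
    have h2 : HasDerivAt (fun y : ℝ => Real.exp (-(x * y))) (Real.exp (-(x * y)) * (-x)) y :=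
      h1.exp
    have h3 : HasDerivAt (fun y : ℝ => x * y ^ 2) (x * (2 * y)) y := by
      simpa using (hasDerivAt_pow 2 y).const_mul x
    simpa [hH] using (h2.add h3).sub_const 1
  have hderiv : deriv H = fun y => Real.exp (-(x * y)) * (-x) + x * (2 * y) := by
    funext y; exact (hd y).deriv
  have hd2 : ∀ y : ℝ, HasDerivAt (deriv H) (Real.exp (-(x * y)) * (-x) * (-x) + x * 2) y := by
    intro y
    rw [hderiv]
    have h1 : HasDerivAt (fun y : ℝ => -(x * y)) (-x) y := by
      have := ((hasDerivAt_id y).const_mul x).neg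
      simp only [id, mul_one] at this
      exact this
    have h2 : HasDerivAt (fun y : ℝ => Real.exp (-(x * y))) (Real.exp (-(x * y)) * (-x)) y :=
      h1.exp
    have h3 : HasDerivAt (fun y : ℝ => x * (2 * y)) (x * 2) y := by
      simpa [mul_comm, mul_assoc, mul_left_comm] using ((hasDerivAt_id y).const_mul (x * 2))
    exact (h2.mul_const (-x)).add h3
  apply strictConvexOn_of_deriv2_pos convex_univ
  · exact Continuous.continuousOn (by continuity)
  · intro y _
    have hit : deriv^[2] H y = deriv (deriv H) y := by
      simp [Function.iterate_succ, Function.iterate_zero, Function.comp]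
    rw [hit, (hd2 y).deriv]
    have := Real.exp_pos (-(x * y))
    nlinarith [mul_pos (mul_pos this hx) hx]

/-- A strictly convex function vanishing at 0 cannot vanish at two positive points. -/
lemma no_two_zeros (x : ℝ) (hx : 0 < x) {a b : ℝ} (h0a : 0 < a) (hab : a < b)
    (Ha : Real.exp (-(x * a)) + x * a ^ 2 - 1 = 0)
    (Hb : Real.exp (-(x * b)) + x * b ^ 2 - 1 = 0) : False := by
  have hsc := Hconvex x hx
  have hb0 : (0:ℝ) < b := h0a.trans hab
  have hθ : 0 < 1 - a / b := by
    have : a / b < 1 := (div_lt_one hb0).2 hab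
    linarith
  have hη : 0 < a / b := div_pos h0a hb0
  have key := hsc.2 (Set.mem_univ (0:ℝ)) (Set.mem_univ b) hb0.ne
    hθ hη (by ring)
  simp only [smul_eq_mul, mul_zero, add_zero, zero_add] at key
  have hb' : a / b * b = a := div_mul_cancel₀ a hb0.ne'
  have h00 : Real.exp (-(0:ℝ)) + x * 0 ^ 2 - 1 = 0 := by simp
  rw [hb', Ha, Hb, h00] at key
  norm_num at key

/-- For every `x > 0` there is a unique `y ∈ (0,1)` with
`y = e^{−x} ∑_{i=0}^∞ x^i (1 − (1−y)^{i+1}) / ((i+1)!·y)`, the series converging. -/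
theorem fixed_point_proposal_probability (x : ℝ) (hx : 0 < x) :
    ∃! y : ℝ, y ∈ Set.Ioo (0 : ℝ) 1 ∧
      Summable (fun i : ℕ =>
        x ^ i * (1 - (1 - y) ^ (i + 1)) / ((Nat.factorial (i + 1) : ℝ) * y)) ∧
      y = Real.exp (-x) *
        ∑' i : ℕ,
          x ^ i * (1 - (1 - y) ^ (i + 1)) / ((Nat.factorial (i + 1) : ℝ) * y) := by
  set H : ℝ → ℝ := fun y => Real.exp (-(x * y)) + x * y ^ 2 - 1 with hH
  -- existence of a zero of H in (0,1)
  set y₀ : ℝ := min (1/2) (1/(2*x)) with hy₀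
  have hy₀pos : 0 < y₀ := lt_min (by norm_num) (by positivity)
  have hy₀lt1 : y₀ < 1 := lt_of_le_of_lt (min_le_left _ _) (by norm_num)
  have hy₀half : y₀ ≤ 1/2 := min_le_left _ _
  have hty₀ : x * y₀ ≤ 1/2 := by
    have h2 : y₀ ≤ 1/(2*x) := min_le_right _ _
    calc x * y₀ ≤ x * (1/(2*x)) := by nlinarith
    _ = 1/2 := by field_simp
  have hHy₀ : H y₀ < 0 := by
    have ht : 0 < x * y₀ := mul_pos hx hy₀pos
    have hlt : x * y₀ + 1 < Real.exp (x * y₀) := Real.add_one_lt_exp ht.ne'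
    have hepos : 0 < Real.exp (-(x * y₀)) := Real.exp_pos _
    have hmul : Real.exp (-(x * y₀)) * Real.exp (x * y₀) = 1 := by
      rw [← Real.exp_add]; simp
    have key : Real.exp (-(x * y₀)) * (1 + x * y₀) < 1 := by nlinarith
    show Real.exp (-(x * y₀)) + x * y₀ ^ 2 - 1 < 0
    nlinarith [mul_pos hy₀pos ht, sq_nonneg y₀, mul_pos hepos ht]
  have hH1 : 0 < H 1 := by
    have := Real.add_one_lt_exp (neg_ne_zero.2 hx.ne')
    show 0 < Real.exp (-(x * 1)) + x * 1 ^ 2 - 1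
    rw [mul_one]
    nlinarith
  have hcont : Continuous H := by
    apply Continuous.sub
    · exact ((Real.continuous_exp.comp (by continuity)).add (by continuity))
    · exact continuous_const
  obtain ⟨c, hcmem, hHc⟩ :=
    intermediate_value_Ioo hy₀lt1.le hcont.continuousOn ⟨hHy₀, hH1⟩
  have hc01 : c ∈ Set.Ioo (0:ℝ) 1 := ⟨hy₀pos.trans hcmem.1, hcmem.2⟩
  refine ⟨c, ⟨hc01, (aux_sum x c hx hc01.1.ne').1, (fixed_iff x hx hc01.1).2 hHc⟩, ?_⟩
  rintro z ⟨hz01, -, heqz⟩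
  have hHz : H z = 0 := (fixed_iff x hx hz01.1).1 heqz
  rcases lt_trichotomy z c with h | h | h
  · exact absurd (no_two_zeros x hx hz01.1 h hHz hHc) (fun f => f.elim)
  · exact h
  · exact absurd (no_two_zeros x hx hc01.1 h hHc hHz) (fun f => f.elim)
end
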